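/- For q ∈ (0,1), a ∈ ℂ, and z ∈ ℂ with |z| < 1, the q-binomial theorem holds: Σ_{n=0}^∞ ((a;q)_n / (q;q)_n) z^n = (az;q)_∞ / (z;q)_∞, where (a;q)_n = Π_{m=0}^{n-1}(1 - a q^m) and (a;q)_∞ = Π_{m=0}^∞ (1 - a q^m). -/

import Mathlib

open Finset

/-- finite q-Pochhammer symbol `(a;q)_n = ∏_{m=0}^{n-1} (1 - a q^m)` -/
noncomputable def qPoch (a q : ℂ) (n : ℕ) : ℂ :=
  ∏ m ∈ Finset.range n, (1 - a * q ^ m)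

/-- infinite q-Pochhammer symbol `(a;q)_∞ = ∏_{m=0}^∞ (1 - a q^m)` -/
noncomputable def qPochInf (a q : ℂ) : ℂ :=
  ∏' m : ℕ, (1 - a * q ^ m)

open Filter Topology

theorem exp_le_one_sub (q x : ℝ) (hq : 0 < q) (hq1 : q < 1) (hx : 0 ≤ x) (hxq : x ≤ q) :
    Real.exp (-(x/(1-q))) ≤ 1 - x := by
  set t := x/(1-q) with ht
  have h1q : 0 < 1 - q := by linarith
  have ht0 : 0 ≤ t := div_nonneg hx h1q.le
  have h1 : 1 + t ≤ Real.exp t := by linarith [Real.add_one_le_exp t]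
  have h2 : (1:ℝ) ≤ (1 - x) * (1 + t) := by
    rw [ht, div_eq_mul_inv]
    have : (1-x) * (1 + x * (1-q)⁻¹) = 1 + x*(q-x) * (1-q)⁻¹ := by
      field_simp; ring
    rw [this]
    nlinarith [mul_nonneg (mul_nonneg hx (by linarith : (0:ℝ) ≤ q - x)) (inv_nonneg.2 h1q.le)]
  have h3 : (Real.exp t)⁻¹ ≤ (1+t)⁻¹ := by
    apply inv_anti₀ (by linarith) h1
  have h4 : (1+t)⁻¹ ≤ 1 - x := by
    rw [inv_le_iff_one_le_mul₀ (by linarith)]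
    nlinarith
  rw [Real.exp_neg]
  linarith

theorem geom_sum_bound (q : ℝ) (hq : 0 < q) (hq1 : q < 1) (n : ℕ) :
    ∑ m ∈ range n, q ^ m ≤ 1 / (1 - q) := by
  have h1q : 0 < 1 - q := by linarith
  have := geom_sum_eq (by linarith : q ≠ 1) n
  rw [this, show (q^n - 1)/(q-1) = (1 - q^n)/(1-q) by rw [div_eq_div_iff (by linarith) (by linarith)]; ring]
  have : 0 ≤ q ^ n := pow_nonneg hq.le n
  gcongr
  linarith

theorem qq_ne (q : ℝ) (hq : 0 < q) (hq1 : q < 1) (w : ℂ) (hw : ‖w‖ < 1) (m : ℕ) :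
    (1 : ℂ) - w * (q:ℂ) ^ m ≠ 0 := by
  intro h
  have hwq : ‖w * (q:ℂ)^m‖ < 1 := by
    rw [norm_mul, norm_pow, Complex.norm_real, Real.norm_of_nonneg hq.le]
    calc ‖w‖ * q ^ m ≤ ‖w‖ * 1 := by
          apply mul_le_mul_of_nonneg_left _ (norm_nonneg w)
          exact pow_le_one₀ hq.le hq1.le
      _ < 1 := by simpa using hw
  rw [sub_eq_zero] at h
  rw [← h] at hwq
  simp at hwq

theorem normQpow (q : ℝ) (hq : 0 < q) (m : ℕ) : ‖((q:ℂ)) ^ m‖ = q ^ m := by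
  rw [norm_pow, Complex.norm_real, Real.norm_of_nonneg hq.le]

theorem num_bound (q : ℝ) (hq : 0 < q) (hq1 : q < 1) (a : ℂ) (n : ℕ) :
    ‖qPoch a (q:ℂ) n‖ ≤ Real.exp (‖a‖/(1-q)) := by
  have h1q : 0 < 1 - q := by linarith
  rw [qPoch, norm_prod]
  calc ∏ m ∈ range n, ‖1 - a * (q:ℂ)^m‖
      ≤ ∏ m ∈ range n, Real.exp (‖a‖ * q^m) := by
        apply Finset.prod_le_prod (fun m _ => norm_nonneg _)
        intro m _
        calc ‖1 - a * (q:ℂ)^m‖ ≤ ‖(1:ℂ)‖ + ‖a * (q:ℂ)^m‖ := norm_sub_le _ _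
          _ = 1 + ‖a‖ * q^m := by rw [norm_one, norm_mul, normQpow q hq]
          _ ≤ Real.exp (‖a‖ * q^m) := by
              linarith [Real.add_one_le_exp (‖a‖ * q^m)]
    _ = Real.exp (∑ m ∈ range n, ‖a‖ * q^m) := (Real.exp_sum _ _).symm
    _ ≤ Real.exp (‖a‖/(1-q)) := by
        apply Real.exp_le_exp.2
        rw [← Finset.mul_sum]
        calc ‖a‖ * ∑ m ∈ range n, q^m ≤ ‖a‖ * (1/(1-q)) :=
              mul_le_mul_of_nonneg_left (geom_sum_bound q hq hq1 n) (norm_nonneg a)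
          _ = ‖a‖/(1-q) := by ring

theorem den_bound (q : ℝ) (hq : 0 < q) (hq1 : q < 1) (n : ℕ) :
    Real.exp (-(q/((1-q)*(1-q)))) ≤ ‖qPoch (q:ℂ) (q:ℂ) n‖ := by
  have h1q : 0 < 1 - q := by linarith
  rw [qPoch, norm_prod]
  calc Real.exp (-(q/((1-q)*(1-q))))
      ≤ Real.exp (∑ m ∈ range n, -(q^(m+1)/(1-q))) := by
        apply Real.exp_le_exp.2
        have hs : ∑ m ∈ range n, q^(m+1) ≤ q/(1-q) := by
          have e1 : ∑ m ∈ range n, q^(m+1) = q * ∑ m ∈ range n, q^m := by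
            rw [Finset.mul_sum]
            exact Finset.sum_congr rfl fun m _ => by ring
          rw [e1]
          calc q * ∑ m ∈ range n, q^m ≤ q * (1/(1-q)) :=
                mul_le_mul_of_nonneg_left (geom_sum_bound q hq hq1 n) hq.le
            _ = q/(1-q) := by ring
        have e2 : ∑ m ∈ range n, -(q^(m+1)/(1-q)) = -((∑ m ∈ range n, q^(m+1))/(1-q)) := by
          rw [Finset.sum_neg_distrib, Finset.sum_div]
        rw [e2, neg_le_neg_iff, div_le_div_iff₀ (by positivity) (by positivity)]
        have h5 := mul_le_mul_of_nonneg_right hs h1q.le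
        rw [div_mul_cancel₀ _ (by linarith : (1:ℝ)-q ≠ 0)] at h5
        nlinarith [h5]
    _ = ∏ m ∈ range n, Real.exp (-(q^(m+1)/(1-q))) := Real.exp_sum _ _
    _ ≤ ∏ m ∈ range n, ‖1 - (q:ℂ) * (q:ℂ)^m‖ := by
        apply Finset.prod_le_prod (fun m _ => (Real.exp_pos _).le)
        intro m _
        calc Real.exp (-(q^(m+1)/(1-q))) ≤ 1 - q^(m+1) := by
              apply exp_le_one_sub q _ hq hq1 (pow_nonneg hq.le _)
              calc q^(m+1) ≤ q^1 := pow_le_pow_of_le_one hq.le hq1.le (by omega)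
                _ = q := pow_one q
          _ ≤ ‖1 - (q:ℂ) * (q:ℂ)^m‖ := by
              have : (q:ℂ) * (q:ℂ)^m = ((q:ℂ))^(m+1) := by ring
              rw [this]
              calc 1 - q^(m+1) = ‖(1:ℂ)‖ - ‖((q:ℂ))^(m+1)‖ := by
                    rw [norm_one, normQpow q hq]
                _ ≤ ‖1 - ((q:ℂ))^(m+1)‖ := norm_sub_norm_le _ _

theorem den_ne (q : ℝ) (hq : 0 < q) (hq1 : q < 1) (n : ℕ) : qPoch (q:ℂ) (q:ℂ) n ≠ 0 := by
  intro h
  have := den_bound q hq hq1 n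
  rw [h, norm_zero] at this
  exact absurd this (not_le.2 (Real.exp_pos _))

theorem c_bound (q : ℝ) (hq : 0 < q) (hq1 : q < 1) (a : ℂ) (n : ℕ) :
    ‖qPoch a (q:ℂ) n / qPoch (q:ℂ) (q:ℂ) n‖ ≤
      Real.exp (‖a‖/(1-q)) * Real.exp (q/((1-q)*(1-q))) := by
  rw [norm_div]
  calc ‖qPoch a (q:ℂ) n‖ / ‖qPoch (q:ℂ) (q:ℂ) n‖
      ≤ Real.exp (‖a‖/(1-q)) / Real.exp (-(q/((1-q)*(1-q)))) := by
        apply div_le_div₀ (Real.exp_pos _).le (num_bound q hq hq1 a n) (Real.exp_pos _)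
          (den_bound q hq hq1 n)
    _ = Real.exp (‖a‖/(1-q)) * Real.exp (q/((1-q)*(1-q))) := by
        rw [Real.exp_neg, div_eq_mul_inv, inv_inv]

theorem c_rec (q : ℝ) (hq : 0 < q) (hq1 : q < 1) (a : ℂ) (n : ℕ) :
    (qPoch a (q:ℂ) (n+1) / qPoch (q:ℂ) (q:ℂ) (n+1)) * (1 - (q:ℂ) * (q:ℂ)^n) =
      (qPoch a (q:ℂ) n / qPoch (q:ℂ) (q:ℂ) n) * (1 - a * (q:ℂ)^n) := by
  have h1 : qPoch a (q:ℂ) (n+1) = qPoch a (q:ℂ) n * (1 - a * (q:ℂ)^n) := by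
    rw [qPoch, qPoch, Finset.prod_range_succ]
  have h2 : qPoch (q:ℂ) (q:ℂ) (n+1) = qPoch (q:ℂ) (q:ℂ) n * (1 - (q:ℂ) * (q:ℂ)^n) := by
    rw [qPoch, qPoch, Finset.prod_range_succ]
  rw [h1, h2]
  have hd1 := den_ne q hq hq1 n
  have hd2 : (1:ℂ) - (q:ℂ) * (q:ℂ)^n ≠ 0 := by
    apply qq_ne q hq hq1 _ _ n
    rw [Complex.norm_real, Real.norm_of_nonneg hq.le]; exact hq1
  rw [← div_div, div_mul_cancel₀ _ hd2]
  ring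

noncomputable def qc (a : ℂ) (q : ℝ) (n : ℕ) : ℂ := qPoch a (q:ℂ) n / qPoch (q:ℂ) (q:ℂ) n

noncomputable def qC (a : ℂ) (q : ℝ) : ℝ := Real.exp (‖a‖/(1-q)) * Real.exp (q/((1-q)*(1-q)))

theorem c_bound' (q : ℝ) (hq : 0 < q) (hq1 : q < 1) (a : ℂ) (n : ℕ) :
    ‖qc a q n‖ ≤ qC a q := c_bound q hq hq1 a n

theorem qc_summable (q : ℝ) (hq : 0 < q) (hq1 : q < 1) (a w : ℂ) (hw : ‖w‖ < 1) :
    Summable (fun n => qc a q n * w ^ n) := by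
  apply Summable.of_norm_bounded (g := fun n => qC a q * ‖w‖ ^ n)
  · exact (summable_geometric_of_norm_lt_one (x := ‖w‖) (by simpa using hw)).mul_left (qC a q)
  · intro n
    rw [norm_mul, norm_pow]
    exact mul_le_mul_of_nonneg_right (c_bound q hq hq1 a n) (by positivity)

noncomputable def qf (a : ℂ) (q : ℝ) (w : ℂ) : ℂ := ∑' n, qc a q n * w ^ n

theorem qf_hasSum (q : ℝ) (hq : 0 < q) (hq1 : q < 1) (a w : ℂ) (hw : ‖w‖ < 1) :
    HasSum (fun n => qc a q n * w ^ n) (qf a q w) :=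
  (qc_summable q hq hq1 a w hw).hasSum

theorem qc_zero (q : ℝ) : qc a q 0 = 1 := by simp [qc, qPoch]

theorem qf_funceq (q : ℝ) (hq : 0 < q) (hq1 : q < 1) (a : ℂ) (w : ℂ) (hw : ‖w‖ < 1) :
    (1 - w) * qf a q w = (1 - a * w) * qf a q ((q:ℂ) * w) := by
  have hQw : ‖(q:ℂ) * w‖ < 1 := by
    rw [norm_mul, Complex.norm_real, Real.norm_of_nonneg hq.le]
    calc q * ‖w‖ ≤ 1 * ‖w‖ := mul_le_mul_of_nonneg_right hq1.le (norm_nonneg w)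
      _ = ‖w‖ := one_mul _
      _ < 1 := hw
  have h1 := qf_hasSum q hq hq1 a w hw
  have h3 := qf_hasSum q hq hq1 a ((q:ℂ)*w) hQw
  -- shifted series for w * f(w)
  set s : ℕ → ℂ := fun n => if n = 0 then 0 else qc a q (n-1) * w^n with hs_def
  have hs1 : (fun n => s (n+1)) = fun n => qc a q n * w^(n+1) := by
    funext n; simp [hs_def]
  have h2 : HasSum (fun n => qc a q n * w^(n+1)) (w * qf a q w) := by
    have := h1.mul_left w
    rw [show (fun n => w * (qc a q n * w^n)) = fun n => qc a q n * w^(n+1) from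
      funext fun n => by ring] at this
    exact this
  have hs : HasSum s (w * qf a q w) := by
    have := (hasSum_nat_add_iff (f := s) 1).1 (hs1 ▸ h2)
    simpa [hs_def] using this
  -- shifted series for a * w * f(qw)
  set s' : ℕ → ℂ := fun n => if n = 0 then 0 else a * qc a q (n-1) * (q:ℂ)^(n-1) * w^n with hs'_def
  have hs1' : (fun n => s' (n+1)) = fun n => a * qc a q n * (q:ℂ)^n * w^(n+1) := by
    funext n; simp [hs'_def]
  have h4 : HasSum (fun n => a * qc a q n * (q:ℂ)^n * w^(n+1)) (a * w * qf a q ((q:ℂ)*w)) := by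
    have := h3.mul_left (a*w)
    rw [show (fun n => (a*w) * (qc a q n * ((q:ℂ)*w)^n)) =
      fun n => a * qc a q n * (q:ℂ)^n * w^(n+1) from funext fun n => by ring] at this
    exact this
  have hs' : HasSum s' (a * w * qf a q ((q:ℂ)*w)) := by
    have := (hasSum_nat_add_iff (f := s') 1).1 (hs1' ▸ h4)
    simpa [hs'_def] using this
  have hA : HasSum (fun n => qc a q n * w^n - s n) (qf a q w - w * qf a q w) := h1.sub hs
  have hB : HasSum (fun n => qc a q n * ((q:ℂ)*w)^n - s' n)
      (qf a q ((q:ℂ)*w) - a * w * qf a q ((q:ℂ)*w)) := h3.sub hs'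
  have heq : (fun n => qc a q n * w^n - s n) = fun n => qc a q n * ((q:ℂ)*w)^n - s' n := by
    funext n
    match n with
    | 0 => simp [hs_def, hs'_def]
    | n + 1 =>
      simp only [hs_def, hs'_def, Nat.succ_ne_zero, reduceIte, Nat.succ_sub_one]
      have hr := c_rec q hq hq1 a n
      rw [show qc a q (n+1) = qPoch a (q:ℂ) (n+1) / qPoch (q:ℂ) (q:ℂ) (n+1) from rfl,
        show qc a q n = qPoch a (q:ℂ) n / qPoch (q:ℂ) (q:ℂ) n from rfl]
      linear_combination w^(n+1) * hr
  rw [heq] at hA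
  have := hA.unique hB
  linear_combination this

theorem normpow_lt (q : ℝ) (hq : 0 < q) (hq1 : q < 1) (z : ℂ) (hz : ‖z‖ < 1) (N : ℕ) :
    ‖(q:ℂ)^N * z‖ < 1 := by
  rw [norm_mul, norm_pow, Complex.norm_real, Real.norm_of_nonneg hq.le]
  calc q^N * ‖z‖ ≤ 1 * ‖z‖ :=
        mul_le_mul_of_nonneg_right (pow_le_one₀ hq.le hq1.le) (norm_nonneg z)
    _ < 1 := by simpa using hz

theorem qf_iterate (q : ℝ) (hq : 0 < q) (hq1 : q < 1) (a z : ℂ) (hz : ‖z‖ < 1) (N : ℕ) :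
    qf a q z * ∏ m ∈ range N, (1 - z * (q:ℂ)^m) =
      (∏ m ∈ range N, (1 - a * z * (q:ℂ)^m)) * qf a q ((q:ℂ)^N * z) := by
  induction N with
  | zero => simp
  | succ N ih =>
    have hw : ‖(q:ℂ)^N * z‖ < 1 := normpow_lt q hq hq1 z hz N
    have FE := qf_funceq q hq hq1 a ((q:ℂ)^N * z) hw
    have harg : (q:ℂ) * ((q:ℂ)^N * z) = (q:ℂ)^(N+1) * z := by ring
    rw [harg] at FE
    rw [Finset.prod_range_succ, Finset.prod_range_succ]
    linear_combination (1 - z * (q:ℂ)^N) * ih + (∏ m ∈ range N, (1 - a * z * (q:ℂ)^m)) * FE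

theorem qf_tail (q : ℝ) (hq : 0 < q) (hq1 : q < 1) (a z : ℂ) (hz : ‖z‖ < 1)
    (w : ℂ) (hw : ‖w‖ ≤ ‖z‖) :
    ‖qf a q w - 1‖ ≤ qC a q * ‖w‖ / (1 - ‖z‖) := by
  have hw1 : ‖w‖ < 1 := lt_of_le_of_lt hw hz
  have h1 := qf_hasSum q hq hq1 a w hw1
  have ht : HasSum (fun n => qc a q (n+1) * w^(n+1)) (qf a q w - 1) := by
    apply (hasSum_nat_add_iff (f := fun n => qc a q n * w ^ n) 1).2
    have : qf a q w - 1 + ∑ i ∈ range 1, qc a q i * w ^ i = qf a q w := by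
      simp [qc_zero]
    rw [this]; exact h1
  have hsum : Summable (fun n : ℕ => qC a q * ‖w‖ ^ (n+1)) := by
    apply Summable.mul_left
    exact (summable_geometric_of_norm_lt_one (x := ‖w‖) (by simpa using hw1)).comp_injective
      (add_left_injective 1)
  have hCpos : 0 < qC a q := by
    have := (c_bound' q hq hq1 a 0)
    rw [qc_zero, norm_one] at this
    linarith
  have hbd : ∀ n : ℕ, ‖qc a q (n+1) * w^(n+1)‖ ≤ qC a q * ‖w‖ ^ (n+1) := by
    intro n
    rw [norm_mul, norm_pow]
    exact mul_le_mul_of_nonneg_right (c_bound' q hq hq1 a _) (by positivity)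
  have hns : Summable (fun n => ‖qc a q (n+1) * w^(n+1)‖) :=
    Summable.of_nonneg_of_le (fun _ => norm_nonneg _) hbd hsum
  rw [← ht.tsum_eq]
  calc ‖∑' n, qc a q (n+1) * w^(n+1)‖ ≤ ∑' n, ‖qc a q (n+1) * w^(n+1)‖ :=
        norm_tsum_le_tsum_norm hns
    _ ≤ ∑' n : ℕ, qC a q * ‖w‖ ^ (n+1) := Summable.tsum_le_tsum hbd hns hsum
    _ = qC a q * ‖w‖ / (1 - ‖w‖) := by
        rw [show (fun n : ℕ => qC a q * ‖w‖ ^ (n+1)) = fun n : ℕ => (qC a q * ‖w‖) * ‖w‖ ^ n from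
          funext fun n => by ring]
        rw [tsum_mul_left, tsum_geometric_of_lt_one (norm_nonneg w) hw1]
        rw [div_eq_mul_inv]
    _ ≤ qC a q * ‖w‖ / (1 - ‖z‖) := by
        exact div_le_div_of_nonneg_left (by positivity) (by linarith) (by linarith)

theorem qf_tendsto_one (q : ℝ) (hq : 0 < q) (hq1 : q < 1) (a z : ℂ) (hz : ‖z‖ < 1) :
    Tendsto (fun N : ℕ => qf a q ((q:ℂ)^N * z)) atTop (𝓝 1) := by
  rw [tendsto_iff_norm_sub_tendsto_zero]
  apply squeeze_zero (fun N => norm_nonneg _)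
    (g := fun N : ℕ => qC a q * (q^N * ‖z‖) / (1 - ‖z‖))
  · intro N
    have hwn : ‖(q:ℂ)^N * z‖ = q^N * ‖z‖ := by
      rw [norm_mul, norm_pow, Complex.norm_real, Real.norm_of_nonneg hq.le]
    have hwle : ‖(q:ℂ)^N * z‖ ≤ ‖z‖ := by
      rw [hwn]
      calc q^N * ‖z‖ ≤ 1 * ‖z‖ :=
            mul_le_mul_of_nonneg_right (pow_le_one₀ hq.le hq1.le) (norm_nonneg z)
        _ = ‖z‖ := one_mul _
    have := qf_tail q hq hq1 a z hz _ hwle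
    rwa [hwn] at this
  · have h0 : Tendsto (fun N : ℕ => q^N) atTop (𝓝 0) :=
      tendsto_pow_atTop_nhds_zero_of_lt_one hq.le hq1
    have := ((h0.mul_const ‖z‖).const_mul (qC a q)).div_const (1 - ‖z‖)
    simpa using this

-- summability of logs

theorem log_summable (q : ℝ) (hq : 0 < q) (hq1 : q < 1) (b : ℂ) :
    Summable (fun m : ℕ => Complex.log (1 - b * (q:ℂ)^m)) := by
  have hgeo : Summable (fun m : ℕ => b * (q:ℂ)^m) := by
    apply Summable.mul_left
    apply summable_geometric_of_norm_lt_one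
    rw [Complex.norm_real, Real.norm_of_nonneg hq.le]; exact hq1
  exact hgeo.clog_one_sub

-- denominator: HasProd, tendsto, nonzero

theorem den_hasProd (q : ℝ) (hq : 0 < q) (hq1 : q < 1) (z : ℂ) (hz : ‖z‖ < 1) :
    HasProd (fun m : ℕ => 1 - z * (q:ℂ)^m) (qPochInf z (q:ℂ)) := by
  have := (Complex.hasProd_of_hasSum_log (fun m => qq_ne q hq hq1 z hz m)
    (log_summable q hq hq1 z).hasSum).multipliable.hasProd
  exact this

theorem den_ne_zero (q : ℝ) (hq : 0 < q) (hq1 : q < 1) (z : ℂ) (hz : ‖z‖ < 1) :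
    qPochInf z (q:ℂ) ≠ 0 := by
  have := Complex.cexp_tsum_eq_tprod (fun m => qq_ne q hq hq1 z hz m)
    (log_summable q hq hq1 z)
  rw [qPochInf]
  rw [← this]
  exact Complex.exp_ne_zero _

theorem num_hasProd (q : ℝ) (hq : 0 < q) (hq1 : q < 1) (b : ℂ) :
    HasProd (fun m : ℕ => 1 - b * (q:ℂ)^m) (qPochInf b (q:ℂ)) := by
  obtain ⟨M, hM⟩ : ∃ M : ℕ, ‖b‖ * q^M < 1 := by
    have h0 : Tendsto (fun N : ℕ => ‖b‖ * q^N) atTop (𝓝 0) := by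
      have := (tendsto_pow_atTop_nhds_zero_of_lt_one hq.le hq1).const_mul ‖b‖
      simpa using this
    exact ((h0.eventually (gt_mem_nhds one_pos)).exists)
  set b' : ℂ := b * (q:ℂ)^M with hb'
  have hb'n : ‖b'‖ < 1 := by
    rw [hb', norm_mul, norm_pow, Complex.norm_real, Real.norm_of_nonneg hq.le]
    exact hM
  have htail : HasProd (fun m : ℕ => 1 - b' * (q:ℂ)^m)
      (∏' m : ℕ, (1 - b' * (q:ℂ)^m)) := by
    exact (Complex.hasProd_of_hasSum_log (fun m => qq_ne q hq hq1 b' hb'n m)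
      (log_summable q hq hq1 b').hasSum).multipliable.hasProd
  have hshift : (fun m : ℕ => 1 - b' * (q:ℂ)^m) =
      fun m : ℕ => 1 - b * (q:ℂ)^(m + M) := by
    funext m; rw [hb', pow_add]; ring
  rw [hshift] at htail
  have hfull := HasProd.prod_range_mul (f := fun m : ℕ => 1 - b * (q:ℂ)^m) (k := M) htail
  rw [qPochInf, hfull.tprod_eq]
  exact hfull
/-- The q-binomial theorem: for `0 < q < 1` and `|z| < 1`,
`Σ_{n=0}^∞ ((a;q)_n / (q;q)_n) z^n = (az;q)_∞ / (z;q)_∞`. -/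
theorem q_binomial_theorem (q : ℝ) (hq : 0 < q) (hq1 : q < 1)
    (a z : ℂ) (hz : ‖z‖ < 1) :
    HasSum (fun n : ℕ => qPoch a (q : ℂ) n / qPoch (q : ℂ) (q : ℂ) n * z ^ n)
      (qPochInf (a * z) (q : ℂ) / qPochInf z (q : ℂ)) := by
  have T1 : Tendsto (fun N : ℕ => qf a q z * ∏ m ∈ range N, (1 - z * (q:ℂ)^m)) atTop
      (𝓝 (qf a q z * qPochInf z (q:ℂ))) :=
    ((den_hasProd q hq hq1 z hz).tendsto_prod_nat).const_mul (qf a q z)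
  have T2 : Tendsto (fun N : ℕ => (∏ m ∈ range N, (1 - a * z * (q:ℂ)^m)) *
      qf a q ((q:ℂ)^N * z)) atTop (𝓝 (qPochInf (a * z) (q:ℂ) * 1)) := by
    have hn := (num_hasProd q hq hq1 (a*z)).tendsto_prod_nat
    rw [show (fun m : ℕ => 1 - a * z * (q:ℂ)^m) = fun m : ℕ => 1 - (a*z) * (q:ℂ)^m from rfl] at hn
    exact hn.mul (qf_tendsto_one q hq hq1 a z hz)
  have T1' : Tendsto (fun N : ℕ => qf a q z * ∏ m ∈ range N, (1 - z * (q:ℂ)^m)) atTop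
      (𝓝 (qPochInf (a * z) (q:ℂ) * 1)) := by
    apply T2.congr
    intro N
    exact (qf_iterate q hq hq1 a z hz N).symm
  have key : qf a q z * qPochInf z (q:ℂ) = qPochInf (a * z) (q:ℂ) := by
    have := tendsto_nhds_unique T1 T1'
    rw [this, mul_one]
  have hfz : qf a q z = qPochInf (a * z) (q:ℂ) / qPochInf z (q:ℂ) := by
    rw [eq_div_iff (den_ne_zero q hq hq1 z hz)]
    exact key
  have := qf_hasSum q hq hq1 a z hz
  rw [hfz] at this
  exact this
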